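/- Under Assumption 1, for every 0 < λ < Δ/K² there exists a > 0 such that, with V(θ) := exp(a‖θ‖²), the drift inequality [Q(y)V](θ) := ∫_{ℝ^d} V(z) Q(y, θ, dz) ≤ γ·V(θ) + C holds for all θ ∈ ℝ^d and all y ∈ ℝ^m with ‖y‖ ≤ M, with some constants γ ∈ (0,1) and C ≥ 1. -/

import Mathlib

open MeasureTheory ProbabilityTheory Filter Real
open scoped RealInnerProductSpace ENNReal

noncomputable section

/-- `ℝ^d` as Euclidean space. -/
abbrev Ed (d : ℕ) : Type := EuclideanSpace ℝ (Fin d)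

/-- The standard Gaussian measure on `ℝ^d` (mean `0`, identity covariance). -/
def stdGaussian (d : ℕ) : Measure (Ed d) :=
  (Measure.pi fun _ : Fin d => gaussianReal 0 1).map
    (MeasurableEquiv.toLp 2 (Fin d → ℝ))

/-- The SGLD parametric transition kernel
`Q(y, θ, A) = P(θ − λH(θ,y) + √(2λ)ξ₀ ∈ A)`, as a measure in its last argument. -/
def kernelQ {d m : ℕ} (H : Ed d → Ed m → Ed d) (lam : ℝ) (y : Ed m) (θ : Ed d) :
    Measure (Ed d) :=
  (stdGaussian d).map (fun z => θ - lam • H θ y + (Real.sqrt (2 * lam)) • z)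

lemma aux_oneDim (a σ c : ℝ) (h : a * σ^2 < 1/2) :
    ∫⁻ x : ℝ, ENNReal.ofReal (Real.exp (a * (c + σ * x)^2)) ∂(gaussianReal 0 1)
      = ENNReal.ofReal ((Real.sqrt (1 - 2*(a*σ^2)))⁻¹
          * Real.exp (a * c^2 / (1 - 2*(a*σ^2)))) := by
  have hp : 0 < 1/2 - a*σ^2 := by linarith
  set p : ℝ := 1/2 - a*σ^2 with hp_def
  have h2p : 1 - 2*(a*σ^2) = 2*p := by rw [hp_def]; ring
  set s : ℝ := a*c*σ/p with hs_def
  have hcont : Continuous fun x : ℝ => Real.exp (a * (c + σ * x)^2) := by fun_prop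
  have hmeas : Measurable fun x : ℝ => ENNReal.ofReal (Real.exp (a * (c + σ * x)^2)) :=
    hcont.measurable.ennreal_ofReal
  rw [gaussianReal_of_var_ne_zero _ one_ne_zero,
    lintegral_withDensity_eq_lintegral_mul _ (measurable_gaussianPDF _ _) hmeas]
  have key : ∀ x : ℝ, (gaussianPDF 0 1 * fun x => ENNReal.ofReal (Real.exp (a*(c+σ*x)^2))) x
      = ENNReal.ofReal ((Real.sqrt (2*π))⁻¹
          * (Real.exp (a*c^2/(2*p)) * Real.exp (-(p * (x - s)^2)))) := by
    intro x
    simp only [Pi.mul_apply, gaussianPDF, gaussianPDFReal, NNReal.coe_one, mul_one, sub_zero]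
    rw [← ENNReal.ofReal_mul (by positivity)]
    congr 1
    rw [mul_assoc, ← Real.exp_add, ← Real.exp_add]
    congr 2
    rw [hs_def]
    field_simp
    ring
  simp_rw [key]
  have hint : Integrable (fun x : ℝ => (Real.sqrt (2*π))⁻¹
      * (Real.exp (a*c^2/(2*p)) * Real.exp (-(p * (x - s)^2)))) := by
    apply Integrable.const_mul
    apply Integrable.const_mul
    have := (integrable_exp_neg_mul_sq hp).comp_sub_right s
    simpa [neg_mul] using this
  rw [← ofReal_integral_eq_lintegral_ofReal hint (ae_of_all _ fun x => by positivity)]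
  congr 1
  rw [integral_const_mul, integral_const_mul]
  have h1 : ∫ x : ℝ, Real.exp (-(p * (x - s)^2)) = Real.sqrt (π/p) := by
    rw [integral_sub_right_eq_self (μ := volume) (fun x => Real.exp (-(p * x^2))) s]
    simpa [neg_mul] using integral_gaussian p
  rw [h1, h2p]
  have hsq : Real.sqrt (2*p) * Real.sqrt (π/p) = Real.sqrt (2*π) := by
    rw [← Real.sqrt_mul (by positivity)]
    congr 1
    field_simp
  have h2ppos : 0 < Real.sqrt (2*p) := Real.sqrt_pos.mpr (by positivity)
  have h2pipos : 0 < Real.sqrt (2*π) := Real.sqrt_pos.mpr (by positivity)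
  field_simp
  nlinarith [hsq]


lemma aux_lintegral_pi {n : ℕ} (μ : Measure ℝ) [SigmaFinite μ] (f : Fin n → ℝ → ℝ≥0∞)
    (hf : ∀ i, Measurable (f i)) :
    ∫⁻ x : Fin n → ℝ, ∏ i, f i (x i) ∂(Measure.pi fun _ => μ) = ∏ i, ∫⁻ y, f i y ∂μ := by
  induction n with
  | zero => simp [Measure.pi_univ]
  | succ n ih =>
    have hmp := (measurePreserving_piFinSuccAbove (fun _ : Fin (n+1) => μ) 0).symm
    rw [← hmp.lintegral_comp_emb (MeasurableEquiv.measurableEmbedding _)]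
    simp_rw [MeasurableEquiv.piFinSuccAbove_symm_apply, Fin.insertNthEquiv,
      Fin.prod_univ_succ, Fin.insertNth_zero]
    simp only [Fin.zero_succAbove, Function.comp_def, Fin.cons_zero, Fin.cons_succ,
      Equiv.coe_fn_mk, cast_eq]
    have hg : AEMeasurable (fun x : Fin n → ℝ => ∏ i : Fin n, f i.succ (x i))
        (Measure.pi fun _ : Fin n => μ) :=
      (Finset.measurable_prod _ fun i _ => (hf i.succ).comp (measurable_pi_apply i)).aemeasurable
    rw [lintegral_prod_mul (hf 0).aemeasurable hg, ih (fun i => f i.succ) (fun i => hf i.succ)]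

lemma aux_kernel {d m : ℕ} (H : Ed d → Ed m → Ed d) (lam a : ℝ) (hlam : 0 ≤ lam)
    (h : a * (2*lam) < 1/2) (y : Ed m) (θ : Ed d) :
    ∫⁻ z, ENNReal.ofReal (Real.exp (a * ‖z‖ ^ 2)) ∂(kernelQ H lam y θ)
      = ENNReal.ofReal (((Real.sqrt (1 - 2*(a*(2*lam))))⁻¹)^d
          * Real.exp (a * ‖θ - lam • H θ y‖^2 / (1 - 2*(a*(2*lam))))) := by
  set μv := θ - lam • H θ y with hμv
  set σ := Real.sqrt (2*lam) with hσ
  have hσ2 : σ^2 = 2*lam := Real.sq_sqrt (by positivity)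
  have hσ' : a * σ^2 < 1/2 := by rw [hσ2]; exact h
  have hφ : Measurable fun z : Ed d => μv + σ • z := by fun_prop
  have hf : Measurable fun z : Ed d => ENNReal.ofReal (Real.exp (a * ‖z‖ ^ 2)) := by
    apply Measurable.ennreal_ofReal; fun_prop
  have he : Measurable (MeasurableEquiv.toLp 2 (Fin d → ℝ)) :=
    (MeasurableEquiv.toLp 2 (Fin d → ℝ)).measurable
  rw [kernelQ, _root_.stdGaussian, Measure.map_map hφ he, lintegral_map hf (hφ.comp he)]
  have hnorm : ∀ x : Fin d → ℝ,
      ENNReal.ofReal (Real.exp (a * ‖μv + σ • ((MeasurableEquiv.toLp 2 (Fin d → ℝ)) x : Ed d)‖ ^ 2))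
      = ∏ i, ENNReal.ofReal (Real.exp (a * (μv i + σ * x i)^2)) := by
    intro x
    have hco : ∀ i, (μv + σ • (MeasurableEquiv.toLp 2 (Fin d → ℝ)) x) i
        = μv i + σ * x i := fun i => rfl
    have : ‖μv + σ • (MeasurableEquiv.toLp 2 (Fin d → ℝ)) x‖^2
        = ∑ i, (μv i + σ * x i)^2 := by
      rw [EuclideanSpace.norm_eq, Real.sq_sqrt (by positivity)]
      exact Finset.sum_congr rfl fun i _ => by rw [hco i, Real.norm_eq_abs, sq_abs]
    simp only [this, Finset.mul_sum, Real.exp_sum]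
    rw [ENNReal.ofReal_prod_of_nonneg (fun i _ => (Real.exp_pos _).le)]
  simp only [Function.comp_apply]
  simp_rw [hnorm]
  rw [aux_lintegral_pi _ (fun i => fun t => ENNReal.ofReal (Real.exp (a * (μv i + σ * t)^2)))
    (fun i => by apply Measurable.ennreal_ofReal; fun_prop)]
  have : ∀ i : Fin d, ∫⁻ t : ℝ, ENNReal.ofReal (Real.exp (a * (μv i + σ * t)^2)) ∂(gaussianReal 0 1)
      = ENNReal.ofReal ((Real.sqrt (1 - 2*(a*σ^2)))⁻¹
          * Real.exp (a * (μv i)^2 / (1 - 2*(a*σ^2)))) := fun i => aux_oneDim a σ (μv i) hσ'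
  simp_rw [this]
  rw [← ENNReal.ofReal_prod_of_nonneg (fun i _ => by positivity)]
  congr 1
  rw [Finset.prod_mul_distrib, Finset.prod_const, ← Real.exp_sum, hσ2]
  simp only [Finset.card_univ, Fintype.card_fin]
  congr 1
  rw [← Finset.sum_div, ← Finset.mul_sum]
  rw [EuclideanSpace.norm_eq, Real.sq_sqrt (by positivity)]
  congr 2
  congr 1
  exact Finset.sum_congr rfl fun i _ => by rw [Real.norm_eq_abs, sq_abs]

set_option maxHeartbeats 2000000 in
/-- (Drift condition.) Under Assumption 1, for every `0 < λ < Δ/K²`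
there exist `a > 0`, `γ ∈ (0,1)` and `C ≥ 1` such that with `V(θ) = exp(a‖θ‖²)`,
`[Q(y)V](θ) ≤ γ V(θ) + C` for all `θ` and all `‖y‖ ≤ M`. -/
theorem stmt3 {d m : ℕ}
    (H : Ed d → Ed m → Ed d) (hH : Measurable (Function.uncurry H))
    (Δ b K M : ℝ)
    (hΔ : 0 < Δ) (hb : 0 < b)
    (hdis : ∀ (θ : Ed d) (y : Ed m), Δ * ‖θ‖ ^ 2 - b ≤ ⟪H θ y, θ⟫)
    (hK : Δ / Real.sqrt 2 < K)
    (hlin : ∀ (θ : Ed d) (y : Ed m), ‖H θ y‖ ≤ K * (‖θ‖ + ‖y‖ + 1))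
    (hM : 0 < M)
    (lam : ℝ) (hlam : 0 < lam) (hlam2 : lam < Δ / K ^ 2) :
    ∃ a : ℝ, 0 < a ∧ ∃ γ C : ℝ, γ ∈ Set.Ioo (0 : ℝ) 1 ∧ 1 ≤ C ∧
      ∀ (θ : Ed d) (y : Ed m), ‖y‖ ≤ M →
        ∫⁻ z, ENNReal.ofReal (Real.exp (a * ‖z‖ ^ 2)) ∂(kernelQ H lam y θ)
          ≤ ENNReal.ofReal (γ * Real.exp (a * ‖θ‖ ^ 2) + C) := by
  have hK0 : 0 < K := lt_trans (div_pos hΔ (Real.sqrt_pos.mpr two_pos)) hK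
  have hlamK : lam * K^2 < Δ := (lt_div_iff₀ (by positivity)).mp hlam2
  have hΔ2K : Δ^2 < 2*K^2 := by
    have h2 : (0:ℝ) < Real.sqrt 2 := Real.sqrt_pos.mpr two_pos
    have h3 := (div_lt_iff₀ h2).mp hK
    have h4 : Δ*Δ < (K*Real.sqrt 2)*(K*Real.sqrt 2) := mul_self_lt_mul_self hΔ.le h3
    have h5 : Real.sqrt 2 * Real.sqrt 2 = 2 := Real.mul_self_sqrt two_pos.le
    calc Δ^2 = Δ*Δ := sq Δ ▸ rfl
      _ < (K*Real.sqrt 2)*(K*Real.sqrt 2) := h4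
      _ = 2*K^2 := by rw [show (K*Real.sqrt 2)*(K*Real.sqrt 2) = (K*K)*(Real.sqrt 2*Real.sqrt 2) by ring, h5]; ring
  have hlamΔ : lam * Δ < 2 := by
    have h1 := mul_lt_mul_of_pos_left hΔ2K hlam
    have h2 : lam*(2*K^2) < 2*Δ := by linarith only [hlamK]
    have h3 : lam*Δ*Δ < 2*Δ := by nlinarith only [h1, h2]
    exact lt_of_mul_lt_mul_right h3 hΔ.le
  have hlamΔpos : 0 < lam * Δ := mul_pos hlam hΔ
  set ρ₀ : ℝ := 1 - lam*Δ/2 with hρ₀def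
  clear_value ρ₀
  have hρ₀pos : 0 < ρ₀ := by simp only [hρ₀def]; linarith only [hlamΔ]
  have hρ₀lt1 : ρ₀ < 1 := by simp only [hρ₀def]; linarith only [hlamΔpos]
  set ρ₁ : ℝ := (1+ρ₀)/2 with hρ₁def
  clear_value ρ₁
  have hρ₀ρ₁ : ρ₀ < ρ₁ := by simp only [hρ₁def]; linarith only [hρ₀lt1]
  have hρ₁lt1 : ρ₁ < 1 := by simp only [hρ₁def]; linarith only [hρ₀lt1]
  have hρ₁pos : 0 < ρ₁ := lt_trans hρ₀pos hρ₀ρ₁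
  have hfrac : 0 < 1 - ρ₀/ρ₁ := by
    have : ρ₀/ρ₁ < 1 := (div_lt_one hρ₁pos).mpr hρ₀ρ₁
    linarith only [this]
  set a : ℝ := min (1/(16*lam)) ((1 - ρ₀/ρ₁)/(8*lam)) with hadef
  clear_value a
  have hapos : 0 < a := by
    rw [hadef]
    exact lt_min (by positivity) (div_pos hfrac (by positivity))
  refine ⟨a, hapos, ?_⟩
  have ha1 : a*(16*lam) ≤ 1 := by
    have := min_le_left (1/(16*lam)) ((1 - ρ₀/ρ₁)/(8*lam))
    rw [← hadef] at this
    calc a*(16*lam) ≤ (1/(16*lam))*(16*lam) := by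
          apply mul_le_mul_of_nonneg_right this (by positivity)
      _ = 1 := by field_simp
  have ha2 : a*(8*lam) ≤ 1 - ρ₀/ρ₁ := by
    have := min_le_right (1/(16*lam)) ((1 - ρ₀/ρ₁)/(8*lam))
    rw [← hadef] at this
    calc a*(8*lam) ≤ ((1 - ρ₀/ρ₁)/(8*lam))*(8*lam) := by
          apply mul_le_mul_of_nonneg_right this (by positivity)
      _ = 1 - ρ₀/ρ₁ := by field_simp
  set β : ℝ := 1 - 2*(a*(2*lam)) with hβdef
  clear_value β
  have hβ34 : 3/4 ≤ β := by simp only [hβdef]; linarith only [ha1, hapos, hlam]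
  have hβlt : a*(2*lam) < 1/2 := by linarith only [ha1, hapos, hlam]
  have hβpos : 0 < β := by linarith only [hβ34]
  have hρβ : ρ₀/β ≤ ρ₁ := by
    rw [div_le_iff₀ hβpos]
    have hq : ρ₁ * (ρ₀/ρ₁) = ρ₀ := by field_simp
    have ha4 : a*(4*lam) ≤ 1 - ρ₀/ρ₁ := by linarith only [ha2, hfrac]
    have h5 := mul_le_mul_of_nonneg_left ha4 hρ₁pos.le
    simp only [hβdef]
    linarith only [h5, hq]
  -- geometric drift bound
  set ε : ℝ := Δ/(2*lam*K^2) with hεdef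
  clear_value ε
  have hεpos : 0 < ε := by rw [hεdef]; positivity
  set B : ℝ := 2*lam*b + lam^2*K^2*(1+ε⁻¹)*(M+1)^2 with hBdef
  clear_value B
  have hBpos : 0 < B := by
    rw [hBdef]
    have h1 : 0 < ε⁻¹ := inv_pos.mpr hεpos
    have h2 : 0 < lam^2*K^2*(1+ε⁻¹)*(M+1)^2 :=
      mul_pos (mul_pos (mul_pos (pow_pos hlam 2) (pow_pos hK0 2))
        (by linarith only [h1])) (pow_pos (by linarith only [hM]) 2)
    have h3 : 0 < 2*lam*b := mul_pos (mul_pos two_pos hlam) hb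
    linarith only [h2, h3]
  have hmu : ∀ (θ : Ed d) (y : Ed m), ‖y‖ ≤ M →
      ‖θ - lam • H θ y‖^2 ≤ ρ₀*‖θ‖^2 + B := by
    intro θ y hy
    have hnorm : ‖θ - lam • H θ y‖^2
        = ‖θ‖^2 - 2*(lam*⟪H θ y, θ⟫) + lam^2*‖H θ y‖^2 := by
      rw [norm_sub_sq_real, real_inner_smul_right, norm_smul, mul_pow]
      rw [real_inner_comm]
      congr 2
      rw [Real.norm_eq_abs, sq_abs]
    have hH2 : ‖H θ y‖^2 ≤ K^2*(‖θ‖+M+1)^2 := by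
      have h1 : ‖H θ y‖ ≤ K*(‖θ‖+‖y‖+1) := hlin θ y
      have h2 : K*(‖θ‖+‖y‖+1) ≤ K*(‖θ‖+M+1) :=
        mul_le_mul_of_nonneg_left (by linarith only [hy]) hK0.le
      have h3 := mul_self_le_mul_self (norm_nonneg (H θ y)) (le_trans h1 h2)
      nlinarith only [h3]
    have hs3 : Real.sqrt ε * Real.sqrt ε⁻¹ = 1 := by
      rw [← Real.sqrt_mul hεpos.le, mul_inv_cancel₀ hεpos.ne', Real.sqrt_one]
    have key2 : 2*(‖θ‖*(M+1)) ≤ ε*‖θ‖^2 + ε⁻¹*(M+1)^2 := by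
      have h0 := sq_nonneg (Real.sqrt ε * ‖θ‖ - Real.sqrt ε⁻¹ * (M+1))
      have hs1 : Real.sqrt ε ^ 2 = ε := Real.sq_sqrt hεpos.le
      have hs2 : Real.sqrt ε⁻¹ ^ 2 = ε⁻¹ := Real.sq_sqrt (inv_pos.mpr hεpos).le
      have e1 : (Real.sqrt ε * ‖θ‖ - Real.sqrt ε⁻¹ * (M+1))^2
          = ε*‖θ‖^2 - 2*(‖θ‖*(M+1)) + ε⁻¹*(M+1)^2 := by
        calc (Real.sqrt ε * ‖θ‖ - Real.sqrt ε⁻¹ * (M+1))^2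
            = (Real.sqrt ε)^2*‖θ‖^2
              - 2*(Real.sqrt ε * Real.sqrt ε⁻¹)*(‖θ‖*(M+1))
              + (Real.sqrt ε⁻¹)^2*(M+1)^2 := by ring
          _ = ε*‖θ‖^2 - 2*(‖θ‖*(M+1)) + ε⁻¹*(M+1)^2 := by rw [hs1, hs2, hs3]; ring
      rw [e1] at h0
      linarith only [h0]
    have hsq : (‖θ‖+M+1)^2 ≤ (1+ε)*‖θ‖^2 + (1+ε⁻¹)*(M+1)^2 := by nlinarith only [key2]
    have hH2' : lam^2*‖H θ y‖^2 ≤ lam^2*K^2*((1+ε)*‖θ‖^2 + (1+ε⁻¹)*(M+1)^2) := by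
      have g1 := mul_le_mul_of_nonneg_left hH2 (sq_nonneg lam)
      have g2 := mul_le_mul_of_nonneg_left hsq (by positivity : (0:ℝ) ≤ lam^2*K^2)
      nlinarith only [g1, g2]
    have hin' := mul_le_mul_of_nonneg_left (hdis θ y) (by positivity : (0:ℝ) ≤ 2*lam)
    have hεeq : lam^2*K^2*ε = lam*Δ/2 := by
      rw [hεdef]; field_simp
    have hcoef : lam^2*K^2*(1+ε) ≤ lam*Δ + lam*Δ/2 := by
      have g3 := mul_lt_mul_of_pos_left hlamK hlam
      nlinarith only [hεeq, g3]
    have hcoef' := mul_le_mul_of_nonneg_right hcoef (sq_nonneg ‖θ‖)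
    simp only [hρ₀def, hBdef]
    linarith only [hnorm, hH2', hin', hcoef']
  -- analytic constants
  set Dc : ℝ := ((Real.sqrt β)⁻¹)^d with hDdef
  clear_value Dc
  have hDpos : 0 < Dc := by
    rw [hDdef]
    exact pow_pos (inv_pos.mpr (Real.sqrt_pos.mpr hβpos)) d
  set c₀ : ℝ := a*B/β with hc₀def
  clear_value c₀
  set E : ℝ := Dc * Real.exp c₀ with hEdef
  clear_value E
  have hEpos : 0 < E := by rw [hEdef]; exact mul_pos hDpos (Real.exp_pos _)
  set x₀ : ℝ := max 0 (Real.log (2*E) / (a*(1-ρ₁))) with hx₀def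
  clear_value x₀
  have hx₀nonneg : 0 ≤ x₀ := by rw [hx₀def]; exact le_max_left _ _
  set C : ℝ := max 1 (E * Real.exp (a*ρ₁*x₀)) with hCdef
  clear_value C
  have hC1 : (1:ℝ) ≤ C := by rw [hCdef]; exact le_max_left _ _
  refine ⟨1/2, C, ⟨by norm_num, by norm_num⟩, hC1, ?_⟩
  intro θ y hy
  rw [aux_kernel H lam a hlam.le hβlt y θ, ← hβdef, ← hDdef]
  apply ENNReal.ofReal_le_ofReal
  have hmu' := hmu θ y hy
  have hexp1 : a*‖θ - lam • H θ y‖^2/β ≤ a*ρ₁*‖θ‖^2 + c₀ := by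
    calc a*‖θ - lam • H θ y‖^2/β ≤ a*(ρ₀*‖θ‖^2+B)/β := by
          exact (div_le_div_iff_of_pos_right hβpos).mpr (mul_le_mul_of_nonneg_left hmu' hapos.le)
      _ = (a*(ρ₀/β))*‖θ‖^2 + a*B/β := by field_simp
      _ ≤ a*ρ₁*‖θ‖^2 + c₀ := by
          have h1 : a*(ρ₀/β) ≤ a*ρ₁ := mul_le_mul_of_nonneg_left hρβ hapos.le
          have h2 := mul_le_mul_of_nonneg_right h1 (sq_nonneg ‖θ‖)
          rw [hc₀def]
          linarith only [h2]
  have step : Dc * Real.exp (a*‖θ - lam • H θ y‖^2/β)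
      ≤ E * Real.exp (a*ρ₁*‖θ‖^2) := by
    calc Dc * Real.exp (a*‖θ - lam • H θ y‖^2/β)
        ≤ Dc * Real.exp (a*ρ₁*‖θ‖^2 + c₀) :=
          mul_le_mul_of_nonneg_left (Real.exp_le_exp.mpr hexp1) hDpos.le
      _ = E * Real.exp (a*ρ₁*‖θ‖^2) := by
          rw [hEdef, Real.exp_add]; ring
  have main : E * Real.exp (a*ρ₁*‖θ‖^2) ≤ (1/2)*Real.exp (a*‖θ‖^2) + C := by
    set t : ℝ := ‖θ‖^2 with htdef
    clear_value t
    have ht : 0 ≤ t := by rw [htdef]; positivity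
    rcases le_total t x₀ with hcase | hcase
    · have h1 : E*Real.exp (a*ρ₁*t) ≤ E*Real.exp (a*ρ₁*x₀) := by
        apply mul_le_mul_of_nonneg_left (Real.exp_le_exp.mpr ?_) hEpos.le
        have := mul_le_mul_of_nonneg_left hcase (mul_pos hapos hρ₁pos).le
        linarith only [this]
      have h2 : E*Real.exp (a*ρ₁*x₀) ≤ C := by rw [hCdef]; exact le_max_right _ _
      have h3 : (0:ℝ) ≤ (1/2)*Real.exp (a*t) := by positivity
      linarith only [h1, h2, h3]
    · have hx : Real.log (2*E) / (a*(1-ρ₁)) ≤ t :=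
        le_trans (hx₀def ▸ le_max_right 0 (Real.log (2*E) / (a*(1-ρ₁)))) hcase
      have hden : 0 < a*(1-ρ₁) := mul_pos hapos (by linarith only [hρ₁lt1])
      have hlog : Real.log (2*E) ≤ t*(a*(1-ρ₁)) := (div_le_iff₀ hden).mp hx
      have h2E : 2*E ≤ Real.exp (a*(1-ρ₁)*t) := by
        calc 2*E = Real.exp (Real.log (2*E)) := (Real.exp_log (by positivity)).symm
          _ ≤ _ := Real.exp_le_exp.mpr (by linarith only [hlog])
      have hsplit : Real.exp (a*t) = Real.exp (a*ρ₁*t) * Real.exp (a*(1-ρ₁)*t) := by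
        rw [← Real.exp_add]; congr 1; ring
      have hkey : E * Real.exp (a*ρ₁*t) ≤ (1/2)*Real.exp (a*t) := by
        rw [hsplit]
        have h6 := mul_le_mul_of_nonneg_left h2E (Real.exp_pos (a*ρ₁*t)).le
        linarith only [h6]
      have hC0 : (0:ℝ) ≤ C := le_trans zero_le_one hC1
      linarith only [hkey, hC0]
  calc Dc * Real.exp (a*‖θ - lam • H θ y‖^2/β) ≤ E * Real.exp (a*ρ₁*‖θ‖^2) := step
    _ ≤ (1/2)*Real.exp (a*‖θ‖^2) + C := main
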